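/- Let n ≥ 2 be an integer, α ∈ ℝ, a > 0 and 0 ≤ ξ < a. Then F(n, α, a, ξ) < 0 if and only if ∫_{−a}^{(aξ+1)/(a−ξ)} (t − 1/a)(t + a)^{n−2} / (t² + 1)^{(n+2−α)/2} dt < 0. (This follows from the change of variables y₂ = a(a−ξ)/(1+a²) + ((a−ξ)/(1+a²)) t in the integral defining F.) -/

import Mathlib

/-- `F(n, α, a, ξ) = ∫₀¹ ((a(1−t) − ξ)² + t²)^{(α−n−2)/2} (ξ − a(1−t)) t^{n−2} dt`. -/
noncomputable def F (n : ℕ) (α a ξ : ℝ) : ℝ :=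
  ∫ t in (0:ℝ)..1,
    ((a * (1 - t) - ξ) ^ 2 + t ^ 2) ^ ((α - n - 2) / 2) * (ξ - a * (1 - t)) * t ^ (n - 2)

theorem stmt_8 (n : ℕ) (hn : 2 ≤ n) (α : ℝ) (a ξ : ℝ) (ha : 0 < a)
    (hξ0 : 0 ≤ ξ) (hξ : ξ < a) :
    F n α a ξ < 0 ↔
      (∫ t in (-a)..((a * ξ + 1) / (a - ξ)),
        (t - 1 / a) * (t + a) ^ (n - 2) /
          (t ^ 2 + 1) ^ (((n : ℝ) + 2 - α) / 2)) < 0 := by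
  have ha2 : (0:ℝ) < 1 + a ^ 2 := by positivity
  have haξ : (0:ℝ) < a - ξ := by linarith
  set c : ℝ := (a - ξ) / (1 + a ^ 2) with hc_def
  have hc : 0 < c := div_pos haξ ha2
  set B : ℝ := (a * ξ + 1) / (a - ξ) with hB_def
  set p : ℝ := ((n : ℝ) + 2 - α) / 2 with hp_def
  set K : ℝ := (c ^ 2 * (1 + a ^ 2)) ^ ((α - (n:ℝ) - 2) / 2) * (c * a * c ^ (n - 2))
    with hK_def
  have hK : 0 < K := by
    have h1 : (0:ℝ) < (c ^ 2 * (1 + a ^ 2)) ^ ((α - (n:ℝ) - 2) / 2) :=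
      Real.rpow_pos_of_pos (by positivity) _
    have h2 : (0:ℝ) < c * a * c ^ (n - 2) := by positivity
    exact mul_pos h1 h2
  have key : ∀ s : ℝ,
      ((a * (1 - (c * s + a * c)) - ξ) ^ 2 + (c * s + a * c) ^ 2) ^ ((α - (n:ℝ) - 2) / 2)
        * (ξ - a * (1 - (c * s + a * c))) * (c * s + a * c) ^ (n - 2)
      = K * ((s - 1 / a) * (s + a) ^ (n - 2) / (s ^ 2 + 1) ^ p) := by
    intro s
    have hac : a - ξ = c * (1 + a ^ 2) := by
      rw [hc_def, div_mul_cancel₀ _ (ne_of_gt ha2)]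
    have h1 : a * (1 - (c * s + a * c)) - ξ = c * (1 - a * s) := by
      linear_combination hac
    have h3 : ξ - a * (1 - (c * s + a * c)) = c * a * (s - 1 / a) := by
      have : c * a * (s - 1 / a) = -(c * (1 - a * s)) := by
        field_simp
        ring
      rw [this, ← h1]; ring
    have h2 : c * s + a * c = c * (s + a) := by ring
    have hbase : (a * (1 - (c * s + a * c)) - ξ) ^ 2 + (c * s + a * c) ^ 2
        = (c ^ 2 * (1 + a ^ 2)) * (s ^ 2 + 1) := by
      rw [h1, h2]; ring
    rw [hbase, h3, h2,
      Real.mul_rpow (by positivity) (by positivity), mul_pow,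
      show (α - (n:ℝ) - 2) / 2 = -p from by rw [hp_def]; ring,
      Real.rpow_neg (by positivity : (0:ℝ) ≤ s ^ 2 + 1), hK_def, div_eq_mul_inv,
      show ((-p : ℝ)) = (α - (n:ℝ) - 2) / 2 from by rw [hp_def]; ring]
    ring
  have hcB : c * B + a * c = 1 := by
    rw [hc_def, hB_def]
    field_simp
    ring
  have hc0 : c * (-a) + a * c = 0 := by ring
  have hF : F n α a ξ
      = (c * K) * ∫ s in (-a)..B,
          (s - 1 / a) * (s + a) ^ (n - 2) / (s ^ 2 + 1) ^ p := by
    have hcomp := intervalIntegral.integral_comp_mul_add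
      (a := -a) (b := B) (c := c)
      (fun t => ((a * (1 - t) - ξ) ^ 2 + t ^ 2) ^ ((α - (n:ℝ) - 2) / 2)
        * (ξ - a * (1 - t)) * t ^ (n - 2)) (ne_of_gt hc) (a * c)
    rw [hc0, hcB] at hcomp
    have hleft : (∫ s in (-a)..B,
        ((a * (1 - (c * s + a * c)) - ξ) ^ 2 + (c * s + a * c) ^ 2) ^ ((α - (n:ℝ) - 2) / 2)
          * (ξ - a * (1 - (c * s + a * c))) * (c * s + a * c) ^ (n - 2))
        = K * ∫ s in (-a)..B,
            (s - 1 / a) * (s + a) ^ (n - 2) / (s ^ 2 + 1) ^ p := by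
      rw [← intervalIntegral.integral_const_mul]
      exact intervalIntegral.integral_congr (fun s _ => key s)
    rw [hleft] at hcomp
    have : F n α a ξ = c • (K * ∫ s in (-a)..B,
        (s - 1 / a) * (s + a) ^ (n - 2) / (s ^ 2 + 1) ^ p) := by
      rw [hcomp, smul_smul, mul_inv_cancel₀ (ne_of_gt hc), one_smul]
      rfl
    rw [this, smul_eq_mul]; ring
  rw [hF]
  have hcK : 0 < c * K := mul_pos hc hK
  constructor
  · intro h
    by_contra hge
    push_neg at hge
    nlinarith
  · intro h
    nlinarith
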